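/- Let d be the pseudometric on ℕ_{≥1} × ℕ_{≥1} defined by d((n,m),(n',m')) = 0 if n = n' and m = m'; 0 if n = n', min{m,m'} = 1 and max{m,m'} > n; 0 if n = n' and min{m,m'} > n; 2^{−n} if n = n' and none of the previous cases hold; and 2·∑_{k=min{n,n'}}^{max{n,n'}} k^{−2} if n ≠ n', and let X be the associated quotient metric space. Then X is bounded and X is not starry: there do not exist A > 1 and 0 < η < (A−1)/2 such that for every n ∈ ℕ the space X contains an (A_n,η)-approximate n-star for some A_n ≥ A. -/

import Mathlib

open Finset

/-- The distance function on `ℕ≥1 × ℕ≥1` from the paper: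
`d((n,m),(n',m')) = 0` if `n = n'` and `m = m'`; `0` if `n = n'`, `min{m,m'} = 1` and
`max{m,m'} > n`; `0` if `n = n'` and `min{m,m'} > n`; `2^{-n}` if `n = n'` and none of the
previous cases hold; and `2·∑_{k=min{n,n'}}^{max{n,n'}} k^{-2}` if `n ≠ n'`. -/
noncomputable def starExDist (p q : ℕ+ × ℕ+) : ℝ :=
  if p.1 = q.1 then
    if p.2 = q.2 then 0
    else if min p.2 q.2 = 1 ∧ (p.1 : ℕ) < (max p.2 q.2 : ℕ) then 0
    else if (p.1 : ℕ) < (min p.2 q.2 : ℕ) then 0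
    else (1 / 2 : ℝ) ^ (p.1 : ℕ)
  else 2 * ∑ k ∈ Finset.Icc ((min p.1 q.1 : ℕ+) : ℕ) ((max p.1 q.1 : ℕ+) : ℕ), ((k : ℝ) ^ 2)⁻¹

/-- The pseudometric space `(ℕ≥1 × ℕ≥1, starExDist)` contains an `(A,η)`-approximate
`n`-star (equivalently, its quotient metric space does). -/
def starExHasApproxStar (A η : ℝ) (n : ℕ) : Prop :=
  ∃ ρ : ℝ, 0 < ρ ∧ ∃ x : Fin (n + 1) → ℕ+ × ℕ+,
    (∀ i j : Fin (n + 1), i ≠ 0 → j ≠ 0 → i ≠ j →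
      (A - η) * ρ ≤ starExDist (x i) (x j) ∧ starExDist (x i) (x j) ≤ A * ρ) ∧
    (∀ i : Fin (n + 1), i ≠ 0 →
      ρ ≤ starExDist (x 0) (x i) ∧ starExDist (x 0) (x i) ≤ (1 + η) * ρ)

section helpers


lemma sq_le_two_pow_succ (a : ℕ) : a^2 ≤ 2^(a+1) := by
  rcases lt_or_ge a 4 with h | h
  · interval_cases a <;> decide
  · induction a, h using Nat.le_induction with
    | base => decide
    | succ n hn ih =>
      have h1 : (n+1)^2 ≤ n^2 + n^2 := by nlinarith
      calc (n+1)^2 ≤ n^2 + n^2 := h1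
        _ ≤ 2^(n+1) + 2^(n+1) := by omega
        _ = 2^(n+2) := by ring

lemma half_pow_le (a : ℕ) (ha : 1 ≤ a) : ((1:ℝ)/2)^a ≤ 2 * ((a:ℝ)^2)⁻¹ := by
  have h2 : ((a:ℝ))^2 ≤ 2^(a+1) := by
    have := sq_le_two_pow_succ a
    calc ((a:ℝ))^2 = ((a^2 : ℕ) : ℝ) := by push_cast; ring
      _ ≤ ((2^(a+1) : ℕ) : ℝ) := by exact_mod_cast this
      _ = 2^(a+1) := by push_cast; ring
  have hpos : (0:ℝ) < (a:ℝ)^2 := by positivity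
  have h3 : ((2:ℝ)^(a+1))⁻¹ ≤ ((a:ℝ)^2)⁻¹ := inv_anti₀ hpos h2
  calc ((1:ℝ)/2)^a = 2 * ((2:ℝ)^(a+1))⁻¹ := by
        rw [div_pow, one_pow, pow_succ]
        field_simp
    _ ≤ 2 * ((a:ℝ)^2)⁻¹ := by linarith

lemma basel_aux : ∀ b : ℕ, 1 ≤ b → ∑ k ∈ Icc 1 b, ((k:ℝ)^2)⁻¹ ≤ 2 - (b:ℝ)⁻¹ := by
  intro b hb
  induction b, hb using Nat.le_induction with
  | base => simp; norm_num
  | succ n hn ih =>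
    rw [Finset.sum_Icc_succ_top (by omega)]
    have hn1 : (1:ℝ) ≤ (n:ℝ) := by exact_mod_cast hn
    have h1 : (((n:ℝ)+1)^2)⁻¹ ≤ (n:ℝ)⁻¹ - ((n:ℝ)+1)⁻¹ := by
      rw [inv_sub_inv (by positivity) (by positivity), div_eq_mul_inv]
      have h2 : ((n:ℝ)+1)^2 ≥ (n:ℝ)*((n:ℝ)+1) := by nlinarith
      calc (((n:ℝ)+1)^2)⁻¹ ≤ ((n:ℝ)*((n:ℝ)+1))⁻¹ := inv_anti₀ (by positivity) h2
        _ = ((n:ℝ)+1-(n:ℝ)) * ((n:ℝ)*((n:ℝ)+1))⁻¹ := by ring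
    push_cast
    linarith

lemma basel (a b : ℕ) (ha : 1 ≤ a) : ∑ k ∈ Icc a b, ((k:ℝ)^2)⁻¹ ≤ 2 := by
  rcases lt_or_ge b 1 with h | h
  · rw [Finset.Icc_eq_empty (by omega)]; simp
  · have h1 : ∑ k ∈ Icc a b, ((k:ℝ)^2)⁻¹ ≤ ∑ k ∈ Icc 1 b, ((k:ℝ)^2)⁻¹ :=
      Finset.sum_le_sum_of_subset_of_nonneg (Finset.Icc_subset_Icc_left ha)
        (fun i _ _ => by positivity)
    have h2 := basel_aux b h
    have h3 : (0:ℝ) ≤ (b:ℝ)⁻¹ := by positivity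
    linarith

lemma single_le_sum_icc (a b c : ℕ) (h1 : a ≤ c) (h2 : c ≤ b) :
    ((c:ℝ)^2)⁻¹ ≤ ∑ k ∈ Icc a b, ((k:ℝ)^2)⁻¹ := by
  refine Finset.single_le_sum (f := fun k : ℕ => ((k:ℝ)^2)⁻¹) (fun i _ => by positivity) ?_
  simp only [Finset.mem_Icc]; omega

lemma two_le_sum_icc (a c b : ℕ) (hc : 1 ≤ c) (h1 : a ≤ c) (h2 : c < b) :
    2 * (((c+1:ℕ):ℝ)^2)⁻¹ ≤ ∑ k ∈ Icc a b, ((k:ℝ)^2)⁻¹ := by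
  have hsub : Icc c (c+1) ⊆ Icc a b := Finset.Icc_subset_Icc h1 (by omega)
  have hsum : ∑ k ∈ Icc c (c+1), ((k:ℝ)^2)⁻¹ = ((c:ℝ)^2)⁻¹ + (((c+1:ℕ):ℝ)^2)⁻¹ := by
    rw [Finset.sum_Icc_succ_top (by omega), Finset.Icc_self, Finset.sum_singleton]
  have hcr : (1:ℝ) ≤ (c:ℝ) := by exact_mod_cast hc
  have hmono : (((c+1:ℕ):ℝ)^2)⁻¹ ≤ ((c:ℝ)^2)⁻¹ := by
    apply inv_anti₀ (by positivity)
    push_cast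
    nlinarith
  have hle : ∑ k ∈ Icc c (c+1), ((k:ℝ)^2)⁻¹ ≤ ∑ k ∈ Icc a b, ((k:ℝ)^2)⁻¹ :=
    Finset.sum_le_sum_of_subset_of_nonneg hsub (fun i _ _ => by positivity)
  linarith [hsum ▸ hle]

lemma sum_icc_split (a l l' : ℕ) (h1 : a ≤ l) (h2 : l ≤ l') :
    ∑ k ∈ Icc a l', ((k:ℝ)^2)⁻¹
      = ∑ k ∈ Icc a l, ((k:ℝ)^2)⁻¹ + ∑ k ∈ Ioc l l', ((k:ℝ)^2)⁻¹ := by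
  rw [← Finset.Ico_add_one_right_eq_Icc a l', ← Finset.Ico_add_one_right_eq_Icc a l, ← Finset.Ico_add_one_add_one_eq_Ioc]
  exact (Finset.sum_Ico_consecutive _ (by omega) (by omega)).symm

lemma sum_icc_head (l l' : ℕ) (h : l ≤ l') :
    ∑ k ∈ Icc l l', ((k:ℝ)^2)⁻¹
      = ((l:ℝ)^2)⁻¹ + ∑ k ∈ Ioc l l', ((k:ℝ)^2)⁻¹ := by
  have := sum_icc_split l l l' le_rfl h
  rwa [Finset.Icc_self, Finset.sum_singleton] at this

end helpers

section distlemmas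


lemma pnat_coe_min (m n : ℕ+) : ((min m n : ℕ+) : ℕ) = min (m:ℕ) (n:ℕ) := by
  rcases le_total m n with h | h
  · rw [min_eq_left h, min_eq_left ((PNat.coe_le_coe _ _).2 h)]
  · rw [min_eq_right h, min_eq_right ((PNat.coe_le_coe _ _).2 h)]

lemma pnat_coe_max (m n : ℕ+) : ((max m n : ℕ+) : ℕ) = max (m:ℕ) (n:ℕ) := by
  rcases le_total m n with h | h
  · rw [max_eq_right h, max_eq_right ((PNat.coe_le_coe _ _).2 h)]
  · rw [max_eq_left h, max_eq_left ((PNat.coe_le_coe _ _).2 h)]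

lemma starExDist_cross (p q : ℕ+ × ℕ+) (h : p.1 ≠ q.1) :
    starExDist p q
      = 2 * ∑ k ∈ Finset.Icc (min (p.1:ℕ) (q.1:ℕ)) (max (p.1:ℕ) (q.1:ℕ)), ((k : ℝ) ^ 2)⁻¹ := by
  rw [starExDist, if_neg h, pnat_coe_min, pnat_coe_max]

lemma starExDist_same (p q : ℕ+ × ℕ+) (h : p.1 = q.1) (hne : starExDist p q ≠ 0) :
    starExDist p q = (1/2 : ℝ) ^ (p.1 : ℕ) := by
  rw [starExDist, if_pos h] at hne ⊢
  split_ifs at hne ⊢ with h1 h2 h3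
  · exact absurd rfl hne
  · exact absurd rfl hne
  · exact absurd rfl hne
  · rfl

lemma starExDist_pos_lower (p q : ℕ+ × ℕ+) (h : 0 < starExDist p q) :
    (1/2:ℝ)^(q.1:ℕ) ≤ starExDist p q := by
  by_cases hf : p.1 = q.1
  · rw [starExDist_same p q hf h.ne', hf]
  · rw [starExDist_cross p q hf]
    set a := min (p.1:ℕ) (q.1:ℕ) with ha
    have ha1 : 1 ≤ a := le_min p.1.pos q.1.pos
    have h1 : ((a:ℝ)^2)⁻¹ ≤ ∑ k ∈ Icc a (max (p.1:ℕ) (q.1:ℕ)), ((k:ℝ)^2)⁻¹ :=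
      single_le_sum_icc _ _ _ le_rfl (min_le_max)
    have h2 := half_pow_le a ha1
    have h3 : (1/2:ℝ)^(q.1:ℕ) ≤ (1/2:ℝ)^a :=
      pow_le_pow_of_le_one (by norm_num : (0:ℝ) ≤ 1/2) (by norm_num) (min_le_right _ _)
    linarith

end distlemmas

/-- The quotient metric space of `starExDist` is bounded and is not starry:
there are no `A > 1` and `0 < η < (A−1)/2` such that for every `n` it contains an
`(Aₙ,η)`-approximate `n`-star with `Aₙ ≥ A`. -/
theorem starExDist_bounded_not_starry :
    (∃ M : ℝ, ∀ p q : ℕ+ × ℕ+, starExDist p q ≤ M) ∧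
    ¬ ∃ A η : ℝ, 1 < A ∧ 0 < η ∧ η < (A - 1) / 2 ∧
        ∀ n : ℕ, ∃ An : ℝ, A ≤ An ∧ starExHasApproxStar An η n := by
  constructor
  · -- boundedness
    refine ⟨4, fun p q => ?_⟩
    by_cases h : p.1 = q.1
    · rw [starExDist, if_pos h]
      have hpow : ((1:ℝ)/2)^(p.1:ℕ) ≤ 1 := pow_le_one₀ (by norm_num) (by norm_num)
      split_ifs <;> norm_num <;> linarith
    · rw [starExDist_cross p q h]
      have hmin1 : 1 ≤ min (p.1:ℕ) (q.1:ℕ) := le_min p.1.pos q.1.pos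
      have := basel (min (p.1:ℕ) (q.1:ℕ)) (max (p.1:ℕ) (q.1:ℕ)) hmin1
      linarith
  · rintro ⟨A, η, hA, hη0, hηA, hstar⟩
    set K := ⌊2*η⌋₊ with hKdef
    obtain ⟨An, hAAn, ρ, hρ, x, harm, hctr⟩ := hstar (K+3)
    have hAn1 : 1 + 2*η < An := by linarith
    have hAnη : (0:ℝ) < An - η := by linarith
    by_cases hrep : ∃ i j : Fin (K+3+1), i ≠ 0 ∧ j ≠ 0 ∧ i ≠ j ∧ (x i).1 = (x j).1
    · -- Claim I: two arms on the same level
      obtain ⟨i, j, hi, hj, hij, hlev⟩ := hrep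
      obtain ⟨hlo, hhi⟩ := harm i j hi hj hij
      have hdpos : (0:ℝ) < starExDist (x i) (x j) :=
        lt_of_lt_of_le (by positivity) hlo
      have hdeq := starExDist_same _ _ hlev hdpos.ne'
      obtain ⟨hc1, hc2⟩ := hctr i hi
      have hc0 : (0:ℝ) < starExDist (x 0) (x i) := lt_of_lt_of_le hρ hc1
      have hkey := starExDist_pos_lower (x 0) (x i) hc0
      rw [hdeq] at hlo
      have hstrict : (1+η)*ρ < (An-η)*ρ :=
        mul_lt_mul_of_pos_right (by linarith) hρ
      linarith
    · -- Claim II: all arm levels distinct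
      push_neg at hrep
      set S0 : Finset (Fin (K+3+1)) := Finset.univ.filter (fun j => j ≠ 0) with hS0def
      have hS0card : S0.card = K + 3 := by
        have : S0 = ({0} : Finset (Fin (K+3+1)))ᶜ := by
          ext j; simp [hS0def]
        rw [this, Finset.card_compl, Finset.card_singleton]
        simp
      have hS0ne : S0.Nonempty := Finset.card_pos.1 (by omega)
      obtain ⟨i₀, hi₀, hmin⟩ := S0.exists_min_image (fun j => ((x j).1 : ℕ)) hS0ne
      have hi₀0 : i₀ ≠ 0 := (Finset.mem_filter.1 hi₀).2
      set a := ((x i₀).1 : ℕ) with hadef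
      have ha1 : 1 ≤ a := (x i₀).1.pos
      -- level strictly bigger for other arms
      have hlt : ∀ j ∈ S0, j ≠ i₀ → a < ((x j).1 : ℕ) := by
        intro j hjm hjne
        have hj0 : j ≠ 0 := (Finset.mem_filter.1 hjm).2
        have hne := hrep i₀ j hi₀0 hj0 (fun h => hjne h.symm)
        have : a ≠ ((x j).1 : ℕ) := fun h => hne (PNat.coe_injective h)
        exact lt_of_le_of_ne (hmin j hjm) this
      -- the distance formula to the base arm
      have hv : ∀ j ∈ S0, j ≠ i₀ →
          starExDist (x i₀) (x j) = 2 * ∑ k ∈ Icc a ((x j).1:ℕ), ((k:ℝ)^2)⁻¹ := by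
        intro j hjm hjne
        have hl := hlt j hjm hjne
        have hne : (x i₀).1 ≠ (x j).1 := fun h => absurd (congrArg (PNat.val) h) (by omega)
        rw [starExDist_cross _ _ hne, min_eq_left hl.le, max_eq_right hl.le]
      -- bounds from the star property
      have hvb : ∀ j ∈ S0, j ≠ i₀ →
          (An - η)*ρ ≤ starExDist (x i₀) (x j) ∧ starExDist (x i₀) (x j) ≤ An*ρ := by
        intro j hjm hjne
        exact harm i₀ j hi₀0 (Finset.mem_filter.1 hjm).2 (fun h => hjne h.symm)
      -- gap lemma
      have hgap : ∀ j ∈ S0, ∀ j' ∈ S0, j ≠ i₀ → j' ≠ i₀ →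
          ((x j).1:ℕ) < ((x j').1:ℕ) →
          starExDist (x i₀) (x j) + ρ/2 ≤ starExDist (x i₀) (x j') := by
        intro j hjm j' hj'm hjne hj'ne hll
        have hlj := hlt j hjm hjne
        have hlj' := hlt j' hj'm hj'ne
        set l := ((x j).1:ℕ)
        set l' := ((x j').1:ℕ)
        have hvj := hv j hjm hjne
        have hvj' := hv j' hj'm hj'ne
        have hjj' : j ≠ j' := fun h =>
          absurd (congrArg (fun t => ((x t).1 : ℕ)) h) (Nat.ne_of_lt hll)
        have hdne : (x j).1 ≠ (x j').1 := fun h => by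
          have : l = l' := congrArg PNat.val h
          omega
        have hd : starExDist (x j) (x j') = 2 * ∑ k ∈ Icc l l', ((k:ℝ)^2)⁻¹ := by
          rw [starExDist_cross _ _ hdne, min_eq_left hll.le, max_eq_right hll.le]
        obtain ⟨hd1, _⟩ := harm j j' (Finset.mem_filter.1 hjm).2 (Finset.mem_filter.1 hj'm).2 hjj'
        obtain ⟨_, hvj_hi⟩ := hvb j hjm hjne
        -- split sums
        have hsplit := sum_icc_split a l l' hlj.le hll.le
        have hhead := sum_icc_head l l' hll.le
        -- lower bound on v j : v j ≥ 4/l²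
        have hfour : 2 * ((l:ℝ)^2)⁻¹ ≤ ∑ k ∈ Icc a l, ((k:ℝ)^2)⁻¹ := by
          have h2 := two_le_sum_icc a (l-1) l (by omega) (by omega) (by omega)
          have : l - 1 + 1 = l := by omega
          rwa [this] at h2
        rw [hd] at hd1
        rw [hvj, hvj']
        rw [hsplit]
        rw [hhead] at hd1
        rw [hvj] at hvj_hi
        -- now linear arithmetic
        have hh : ρ/2 ≤ (An/2 - η)*ρ := by nlinarith
        nlinarith [hρ.le]
      -- injection into Finset.range (K+1)
      set lo := (An - η)*ρ with hlodef
      set φ : Fin (K+3+1) → ℕ := fun j => ⌊(starExDist (x i₀) (x j) - lo) / (ρ/2)⌋₊ with hφdef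
      have hhalf : (0:ℝ) < ρ/2 := by linarith
      have hmaps : ∀ j ∈ S0.erase i₀, φ j ∈ Finset.range (K+1) := by
        intro j hjm
        obtain ⟨hjne, hjm0⟩ := Finset.mem_erase.1 hjm
        obtain ⟨hb1, hb2⟩ := hvb j hjm0 hjne
        have ht : (starExDist (x i₀) (x j) - lo) / (ρ/2) ≤ 2*η := by
          rw [div_le_iff₀ hhalf]
          rw [hlodef]
          nlinarith
        have := Nat.floor_le_floor ht
        simp only [Finset.mem_range, hφdef]
        omega
      have hmono : ∀ j ∈ S0.erase i₀, ∀ j' ∈ S0.erase i₀,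
          ((x j).1:ℕ) < ((x j').1:ℕ) → φ j < φ j' := by
        intro j hjm j' hj'm hll
        obtain ⟨hjne, hjm0⟩ := Finset.mem_erase.1 hjm
        obtain ⟨hj'ne, hj'm0⟩ := Finset.mem_erase.1 hj'm
        have hg := hgap j hjm0 j' hj'm0 hjne hj'ne hll
        obtain ⟨hb1, _⟩ := hvb j hjm0 hjne
        set t := (starExDist (x i₀) (x j) - lo) / (ρ/2) with htdef
        set t' := (starExDist (x i₀) (x j') - lo) / (ρ/2) with ht'def
        have ht0 : 0 ≤ t := div_nonneg (by rw [hlodef] at *; linarith) hhalf.le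
        have htt' : t + 1 ≤ t' := by
          rw [htdef, ht'def]
          rw [div_add' _ _ _ hhalf.ne']
          apply (div_le_div_iff_of_pos_right hhalf).2
          linarith
        have h1 : ⌊t⌋₊ + 1 = ⌊t + 1⌋₊ := (Nat.floor_add_one ht0).symm
        have h2 : ⌊t + 1⌋₊ ≤ ⌊t'⌋₊ := Nat.floor_le_floor htt'
        show ⌊t⌋₊ < ⌊t'⌋₊
        omega
      have hinj : Set.InjOn φ (S0.erase i₀) := by
        intro j hjm j' hj'm heq
        by_contra hne
        have hjm' : j ∈ S0.erase i₀ := hjm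
        have hj'm' : j' ∈ S0.erase i₀ := hj'm
        obtain ⟨hjne, hjm0⟩ := Finset.mem_erase.1 hjm'
        obtain ⟨hj'ne, hj'm0⟩ := Finset.mem_erase.1 hj'm'
        have hlevne : ((x j).1:ℕ) ≠ ((x j').1:ℕ) := by
          intro h
          exact hrep j j' (Finset.mem_filter.1 hjm0).2 (Finset.mem_filter.1 hj'm0).2 hne
            (PNat.coe_injective h)
        rcases lt_or_gt_of_ne hlevne with h | h
        · exact absurd heq (Nat.ne_of_lt (hmono j hjm' j' hj'm' h))
        · exact absurd heq.symm (Nat.ne_of_lt (hmono j' hj'm' j hjm' h))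
      have hcard := Finset.card_le_card_of_injOn φ hmaps hinj
      rw [Finset.card_range, Finset.card_erase_of_mem hi₀, hS0card] at hcard
      omega
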